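/- arXiv:math/0106251 — 2 statements merged into one kernel-verified Lean document; each statement's English description precedes it below -/
import Mathlib

section
/- Let A be an element of SL(2, ℝ) with |tr A| > 2, acting on the upper half-plane ℍ by Möbius transformations. Then the infimum over z ∈ ℍ of the hyperbolic distance dist(z, A • z) is equal to 2·arcosh(|tr A| / 2). (Equivalently, the translation length ℓ of the hyperbolic isometry A satisfies 2·cosh(ℓ/2) = |tr A|; this is the relation used to compute lengths of closed geodesics on quotients of ℍ from traces of matrices.) -/
open scoped UpperHalfPlane MatrixGroups

/-- arcosh x = log(x + √(x² − 1)), the inverse hyperbolic cosine. -/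
noncomputable def arcosh (x : ℝ) : ℝ := Real.log (x + Real.sqrt (x ^ 2 - 1))

lemma arcosh_eq_arsinh (x : ℝ) (hx : 1 ≤ x) :
    arcosh x = Real.arsinh (Real.sqrt (x ^ 2 - 1)) := by
  rw [Real.arsinh, arcosh]
  have h1 : 1 + Real.sqrt (x ^ 2 - 1) ^ 2 = x ^ 2 := by
    rw [Real.sq_sqrt (by nlinarith : (0:ℝ) ≤ x ^ 2 - 1)]; ring
  rw [h1, Real.sqrt_sq (by linarith), add_comm]

lemma normSq_key (a b c d : ℝ) (Z : ℂ) (hdet : a * d - b * c = 1) :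
    Complex.normSq ((c:ℂ) * Z ^ 2 + ((d:ℂ) - (a:ℂ)) * Z - (b:ℂ))
      = (c * Z.re ^ 2 + (d - a) * Z.re - b + c * Z.im ^ 2) ^ 2
        + ((a + d) ^ 2 - 4) * Z.im ^ 2 := by
  simp only [Complex.normSq_apply, Complex.mul_re, Complex.mul_im, Complex.sub_re,
    Complex.sub_im, Complex.add_re, Complex.add_im, pow_two, Complex.ofReal_re,
    Complex.ofReal_im]
  ring_nf
  nlinarith [hdet, sq_nonneg Z.im]

lemma dist_smul_formula (A : Matrix.SpecialLinearGroup (Fin 2) ℝ) (z : ℍ) :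
    dist z (A • z) = 2 * Real.arsinh
      (Real.sqrt (Complex.normSq ((A 1 0 : ℂ) * (z:ℂ)^2 + ((A 1 1 : ℂ) - (A 0 0 : ℂ)) * (z:ℂ) - (A 0 1 : ℂ)))
        / (2 * z.im)) := by
  set a : ℝ := A 0 0
  set b : ℝ := A 0 1
  set c : ℝ := A 1 0
  set d : ℝ := A 1 1
  have hdet : a * d - b * c = 1 := by
    have := A.2
    rw [Matrix.det_fin_two] at this
    linarith [this]
  set Z : ℂ := (z : ℂ)
  set y : ℝ := z.im
  have hy : 0 < y := z.2
  set den : ℂ := (c:ℂ) * Z + (d:ℂ)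
  have hZim : Z.im = y := rfl
  have hden : den ≠ 0 := by
    intro hd
    have h1 : den.im = 0 := by rw [hd]; rfl
    have h2 : den.re = 0 := by rw [hd]; rfl
    simp only [den, Complex.add_im, Complex.mul_im, Complex.ofReal_re, Complex.ofReal_im,
      Complex.add_re, Complex.mul_re] at h1 h2
    have hc : c = 0 := by
      rcases mul_eq_zero.1 (by linarith [h1] : c * Z.im = 0) with h | h
      · exact h
      · exact absurd (hZim ▸ h) (ne_of_gt hy)
    rw [hc] at h2 hdet
    simp at h2
    have : d = 0 := by nlinarith [h2]
    rw [this] at hdet; nlinarith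
  have hcoe : (↑(A • z) : ℂ) = ((a:ℂ) * Z + (b:ℂ)) / den := by
    rw [UpperHalfPlane.specialLinearGroup_apply]; simp [den, Z, a, b, c, d]
  set N : ℝ := Complex.normSq den
  have hN : 0 < N := Complex.normSq_pos.2 hden
  have him : (A • z).im = y / N := by
    have : (A • z).im = (↑(A • z) : ℂ).im := rfl
    rw [this, hcoe, Complex.div_im, div_sub_div_same]
    have hnum : ((a:ℂ) * Z + (b:ℂ)).im * den.re - ((a:ℂ) * Z + (b:ℂ)).re * den.im = y := by
      simp only [den, Complex.add_im, Complex.add_re, Complex.mul_im, Complex.mul_re,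
        Complex.ofReal_re, Complex.ofReal_im, hZim]
      nlinarith [hdet]
    rw [hnum]
  set f : ℂ := (c:ℂ) * Z^2 + ((d:ℂ) - (a:ℂ)) * Z - (b:ℂ)
  have hdistC : ‖Z - (↑(A • z) : ℂ)‖ = Real.sqrt (Complex.normSq f) / Real.sqrt N := by
    have hsub : Z - ((a:ℂ) * Z + (b:ℂ)) / den = f / den := by
      field_simp [den, f]; ring
    rw [hcoe, hsub, norm_div, Complex.norm_def, Complex.norm_def]
  rw [UpperHalfPlane.dist_eq]
  congr 1
  rw [Complex.dist_eq, hdistC, him]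
  rw [show y * (y / N) = (y / Real.sqrt N)^2 by
    rw [div_pow, Real.sq_sqrt hN.le]; ring]
  rw [Real.sqrt_sq (by positivity)]
  have hsN : Real.sqrt N ≠ 0 := by positivity
  field_simp

lemma attains_aux (A : Matrix.SpecialLinearGroup (Fin 2) ℝ)
    (h : 2 < |A 0 0 + A 1 1|) (x₀ y₀ : ℝ) (hy : 0 < y₀)
    (heq : A 1 0 * x₀ ^ 2 + (A 1 1 - A 0 0) * x₀ - A 0 1 + A 1 0 * y₀ ^ 2 = 0) :
    ∃ z : ℍ, dist z (A • z) = 2 * arcosh (|A 0 0 + A 1 1| / 2) := by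
  set a : ℝ := A 0 0
  set b : ℝ := A 0 1
  set c : ℝ := A 1 0
  set d : ℝ := A 1 1
  have hdet : a * d - b * c = 1 := by
    have := A.2
    rw [Matrix.det_fin_two] at this
    linarith [this]
  have ht2 : 4 < (a + d) ^ 2 := by
    have := sq_lt_sq' (by linarith : -(|a + d|) < 2) h
    rw [sq_abs] at this
    nlinarith [this]
  refine ⟨UpperHalfPlane.mk ⟨x₀, y₀⟩ hy, ?_⟩
  set z₀ : ℍ := UpperHalfPlane.mk ⟨x₀, y₀⟩ hy
  have hre : (z₀ : ℂ).re = x₀ := rfl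
  have him : (z₀ : ℂ).im = y₀ := rfl
  have himH : z₀.im = y₀ := rfl
  rw [dist_smul_formula A z₀, normSq_key a b c d (z₀ : ℂ) hdet, hre, him, himH, heq]
  have hns : (0:ℝ) ^ 2 + ((a + d) ^ 2 - 4) * y₀ ^ 2 = ((a+d)^2 - 4) * y₀ ^ 2 := by ring
  rw [hns, Real.sqrt_mul (by linarith : (0:ℝ) ≤ (a+d)^2 - 4), Real.sqrt_sq hy.le]
  have harg : Real.sqrt ((a + d) ^ 2 - 4) * y₀ / (2 * y₀)
      = Real.sqrt ((|a + d| / 2) ^ 2 - 1) := by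
    rw [show (|a + d| / 2) ^ 2 - 1 = ((a+d)^2 - 4) / 4 by rw [div_pow, sq_abs]; ring]
    rw [show ((a+d)^2 - 4) / 4 = (Real.sqrt ((a+d)^2-4) / 2)^2 by
      rw [div_pow, Real.sq_sqrt (by linarith : (0:ℝ) ≤ (a+d)^2 - 4)]; norm_num]
    rw [Real.sqrt_sq (by positivity)]
    field_simp
  rw [harg, ← arcosh_eq_arsinh _ (by rw [le_div_iff₀ (by norm_num : (0:ℝ) < 2)]; linarith : 1 ≤ |a + d| / 2)]

/-- For A ∈ SL(2, ℝ) with |tr A| > 2 acting on the upper half-plane ℍ,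
the infimum over z ∈ ℍ of the hyperbolic distance dist(z, A • z) equals
2·arcosh(|tr A| / 2). -/
theorem translation_length_eq_two_arcosh_half_trace
    (A : Matrix.SpecialLinearGroup (Fin 2) ℝ)
    (h : 2 < |Matrix.trace (A : Matrix (Fin 2) (Fin 2) ℝ)|) :
    (⨅ z : ℍ, dist z (A • z))
      = 2 * arcosh (|Matrix.trace (A : Matrix (Fin 2) (Fin 2) ℝ)| / 2) := by
  set a : ℝ := A 0 0
  set b : ℝ := A 0 1
  set c : ℝ := A 1 0
  set d : ℝ := A 1 1
  have htr : Matrix.trace (A : Matrix (Fin 2) (Fin 2) ℝ) = a + d :=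
    Matrix.trace_fin_two _
  rw [htr] at h ⊢
  have hdet : a * d - b * c = 1 := by
    have := A.2
    rw [Matrix.det_fin_two] at this
    linarith [this]
  have ht2 : 4 < (a + d) ^ 2 := by
    have := sq_lt_sq' (by linarith : -(|a + d|) < 2) h
    rw [sq_abs] at this
    nlinarith [this]
  apply le_antisymm
  · obtain ⟨x₀, y₀, hy, heq⟩ :
        ∃ x₀ y₀ : ℝ, 0 < y₀ ∧ c * x₀ ^ 2 + (d - a) * x₀ - b + c * y₀ ^ 2 = 0 := by
      by_cases hc : c = 0
      · have hB : d - a ≠ 0 := by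
          intro hB0
          have hda : d = a := by linarith
          have haa : a * a = 1 := by rw [hc] at hdet; rw [hda] at hdet; linarith
          rw [hda] at ht2; nlinarith
        exact ⟨b / (d - a), 1, one_pos, by field_simp [hc]; rw [hc]; ring⟩
      · refine ⟨(a - d) / (2 * c), Real.sqrt ((a + d) ^ 2 - 4) / (2 * |c|),
          div_pos (Real.sqrt_pos.2 (by linarith)) (by positivity), ?_⟩
        have hy2 : (Real.sqrt ((a + d) ^ 2 - 4) / (2 * |c|)) ^ 2
            = ((a + d) ^ 2 - 4) / (4 * c ^ 2) := by
          rw [div_pow, Real.sq_sqrt (by linarith : (0:ℝ) ≤ (a + d) ^ 2 - 4), mul_pow, sq_abs]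
          norm_num
        rw [hy2]
        field_simp
        linear_combination 16 * hdet
    obtain ⟨z₀, hz₀⟩ := attains_aux A h x₀ y₀ hy heq
    rw [← hz₀]
    exact ciInf_le ⟨0, by rintro x ⟨z, rfl⟩; exact dist_nonneg⟩ z₀
  · apply le_ciInf
    intro z
    rw [dist_smul_formula, arcosh_eq_arsinh _
      (by rw [le_div_iff₀ (by norm_num : (0:ℝ) < 2)]; linarith : 1 ≤ |a + d| / 2)]
    have hy : (0:ℝ) < z.im := z.2
    have hkey : ((a + d) ^ 2 - 4) * z.im ^ 2
        ≤ Complex.normSq ((c:ℂ) * (z:ℂ) ^ 2 + ((d:ℂ) - (a:ℂ)) * (z:ℂ) - (b:ℂ)) := by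
      rw [normSq_key a b c d (z:ℂ) hdet]
      have : (z:ℂ).im = z.im := rfl
      rw [this]
      nlinarith [sq_nonneg (c * (z:ℂ).re ^ 2 + (d - a) * (z:ℂ).re - b + c * z.im ^ 2)]
    gcongr 2 * Real.arsinh ?_
    have h1 : (|a + d| / 2) ^ 2 - 1 = ((a + d) ^ 2 - 4) / 4 := by
      rw [div_pow, sq_abs]; ring
    rw [le_div_iff₀ (by positivity : (0:ℝ) < 2 * z.im)]
    have h2 : Real.sqrt ((|a + d| / 2) ^ 2 - 1) * (2 * z.im)
        = Real.sqrt (((a + d) ^ 2 - 4) * z.im ^ 2) := by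
      rw [h1, Real.sqrt_mul (by linarith : (0:ℝ) ≤ (a + d) ^ 2 - 4), Real.sqrt_sq hy.le,
        show ((a + d) ^ 2 - 4) / 4 = (Real.sqrt ((a + d) ^ 2 - 4) / 2) ^ 2 from by
          rw [div_pow, Real.sq_sqrt (by linarith : (0:ℝ) ≤ (a + d) ^ 2 - 4)]; norm_num,
        Real.sqrt_sq (by positivity)]
      ring
    rw [h2]
    exact Real.sqrt_le_sqrt hkey
end

section
/- There exists a constant C > 0 such that the following holds: for each n, let f be chosen uniformly at random from the fixed-point-free involutions of H_n = Fin(2n) × Fin(3); then the probability that for every nonempty subset S of Fin(2n) with |S| ≤ n, the number of half-edges (v, i) with v ∈ S whose match f(v, i) lies at a vertex outside S is at least C·|S|, tends to 1 as n → ∞. (That is, with probability tending to 1, a random 3-regular graph on 2n vertices has Cheeger constant h(Γ) = inf over edge-cuts E disconnecting Γ into parts A, B of #E / min(#A, #B) greater than C.) -/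
open Filter Topology

/-- The set of half-edges of the Bollobás configuration model on 2n vertices:
three half-edges at each of the 2n vertices. -/
abbrev HalfEdges (n : ℕ) := Fin (2 * n) × Fin 3

/-- The rotation σ(v, j) = (v, j + 1 mod 3), encoding the canonical orientation. -/
def rot (n : ℕ) : Equiv.Perm (HalfEdges n) :=
  Equiv.prodCongr (Equiv.refl (Fin (2 * n))) (finRotate 3)

/-- `f` is a fixed-point-free involution. -/
def IsFPFInvolution {α : Type*} (f : Equiv.Perm α) : Prop :=
  (∀ x, f (f x) = x) ∧ ∀ x, f x ≠ x

/-- The probability, under the uniform measure on fixed-point-free involutions of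
the half-edge set `HalfEdges n`, of the event `P`. -/
noncomputable def probFPF (n : ℕ) (P : Equiv.Perm (HalfEdges n) → Prop) : ℝ :=
  (Nat.card {f : Equiv.Perm (HalfEdges n) // IsFPFInvolution f ∧ P f} : ℝ) /
    (Nat.card {f : Equiv.Perm (HalfEdges n) // IsFPFInvolution f} : ℝ)

namespace CheegerAux

open Equiv Finset

attribute [local instance low] Classical.propDecidable

lemma card_fpf_of_isEmpty {α : Type} [Fintype α] (h : IsEmpty α) :
    Nat.card {f : Equiv.Perm α // IsFPFInvolution f} = 1 := by
  have hall : ∀ f : Equiv.Perm α, IsFPFInvolution f :=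
    fun f => ⟨fun x => h.elim x, fun x => h.elim x⟩
  haveI : Unique (Equiv.Perm α) := ⟨⟨1⟩, fun f => Equiv.ext fun x => h.elim x⟩
  rw [Nat.card_congr (Equiv.subtypeUnivEquiv hall)]
  simp

private lemma pres {α : Type} (x₀ y : α) (f : Equiv.Perm α) (hf : IsFPFInvolution f) (hfx : f x₀ = y) :
    ∀ z, (z ≠ x₀ ∧ z ≠ y) ↔ (f z ≠ x₀ ∧ f z ≠ y) := by
  intro z
  have hy : f y = x₀ := by have := hf.1 x₀; rwa [hfx] at this
  constructor
  · rintro ⟨hz1, hz2⟩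
    exact ⟨fun hc => hz2 (by rw [← hfx, ← hc, hf.1 z]),
           fun hc => hz1 (f.injective (by rw [hc, hfx]))⟩
  · rintro ⟨hz1, hz2⟩
    exact ⟨fun hc => hz2 (by rw [hc, hfx]),
           fun hc => hz1 (by rw [hc, hy])⟩


section Fiber

variable {α : Type} [DecidableEq α] (x₀ y : α)


private def backPerm (g : Equiv.Perm {z : α // z ≠ x₀ ∧ z ≠ y}) : Equiv.Perm α :=
  Equiv.swap x₀ y * Equiv.Perm.ofSubtype g

private lemma backPerm_x₀ (g : Equiv.Perm {z : α // z ≠ x₀ ∧ z ≠ y}) :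
    backPerm x₀ y g x₀ = y := by
  unfold backPerm
  simp only [Equiv.Perm.mul_apply]
  rw [Equiv.Perm.ofSubtype_apply_of_not_mem (p := fun z => z ≠ x₀ ∧ z ≠ y) g (by simp),
    Equiv.swap_apply_left]

private lemma backPerm_y (g : Equiv.Perm {z : α // z ≠ x₀ ∧ z ≠ y}) :
    backPerm x₀ y g y = x₀ := by
  unfold backPerm
  simp only [Equiv.Perm.mul_apply]
  rw [Equiv.Perm.ofSubtype_apply_of_not_mem (p := fun z => z ≠ x₀ ∧ z ≠ y) g (by simp),
    Equiv.swap_apply_right]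

private lemma backPerm_mem (g : Equiv.Perm {z : α // z ≠ x₀ ∧ z ≠ y}) (x : α)
    (hx : x ≠ x₀ ∧ x ≠ y) : backPerm x₀ y g x = ↑(g ⟨x, hx⟩) := by
  unfold backPerm
  simp only [Equiv.Perm.mul_apply]
  rw [Equiv.Perm.ofSubtype_apply_of_mem (p := fun z => z ≠ x₀ ∧ z ≠ y) g hx]
  exact Equiv.swap_apply_of_ne_of_ne (g ⟨x, hx⟩).property.1 (g ⟨x, hx⟩).property.2

private lemma backPerm_fpf (hxy : y ≠ x₀) (g : Equiv.Perm {z : α // z ≠ x₀ ∧ z ≠ y})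
    (hg : IsFPFInvolution g) : IsFPFInvolution (backPerm x₀ y g) := by
  constructor
  · intro x
    by_cases h1 : x = x₀
    · rw [h1, backPerm_x₀, backPerm_y]
    · by_cases h2 : x = y
      · rw [h2, backPerm_y, backPerm_x₀]
      · have hx : x ≠ x₀ ∧ x ≠ y := ⟨h1, h2⟩
        rw [backPerm_mem x₀ y g x hx, backPerm_mem x₀ y g _ (g ⟨x, hx⟩).property]
        have : g ⟨(g ⟨x, hx⟩ : _), (g ⟨x, hx⟩).property⟩ = g (g ⟨x, hx⟩) := by
          congr 1
        rw [this, hg.1]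
  · intro x
    by_cases h1 : x = x₀
    · rw [h1, backPerm_x₀]; exact hxy
    · by_cases h2 : x = y
      · rw [h2, backPerm_y]; exact Ne.symm hxy
      · have hx : x ≠ x₀ ∧ x ≠ y := ⟨h1, h2⟩
        rw [backPerm_mem x₀ y g x hx]
        exact fun hc => hg.2 ⟨x, hx⟩ (Subtype.ext hc)

/-- Fiber equivalence: FPF involutions sending `x₀` to `y` correspond to
FPF involutions of the complement of `{x₀, y}`. -/
def fiberEquiv (hxy : y ≠ x₀) :
    {f : Equiv.Perm α // IsFPFInvolution f ∧ f x₀ = y} ≃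
      {g : Equiv.Perm {z : α // z ≠ x₀ ∧ z ≠ y} // IsFPFInvolution g} where
  toFun := fun ⟨f, hf, hfx⟩ =>
    ⟨f.subtypePerm (fun z => (pres x₀ y f hf hfx z).symm),
      ⟨fun ⟨z, hz⟩ => Subtype.ext (hf.1 z),
       fun ⟨z, hz⟩ hc => hf.2 z (congrArg Subtype.val hc)⟩⟩
  invFun := fun ⟨g, hg⟩ =>
    ⟨backPerm x₀ y g, backPerm_fpf x₀ y hxy g hg, backPerm_x₀ x₀ y g⟩
  left_inv := by
    rintro ⟨f, hf, hfx⟩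
    apply Subtype.ext
    ext x
    simp only
    by_cases h1 : x = x₀
    · rw [h1, backPerm_x₀, hfx]
    · by_cases h2 : x = y
      · rw [h2, backPerm_y, ← hfx, hf.1]
      · have hx : x ≠ x₀ ∧ x ≠ y := ⟨h1, h2⟩
        rw [backPerm_mem x₀ y _ x hx]
        rfl
  right_inv := by
    rintro ⟨g, hg⟩
    apply Subtype.ext
    ext z
    obtain ⟨z, hz⟩ := z
    simp only [Equiv.Perm.subtypePerm_apply]
    rw [backPerm_mem x₀ y g z hz]

end Fiber



lemma card_fpf_mul (m : ℕ) : ∀ (α : Type) [Fintype α] [DecidableEq α],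
    Fintype.card α = 2 * m →
    Nat.card {f : Equiv.Perm α // IsFPFInvolution f} * (2 ^ m * m.factorial)
      = (2 * m).factorial := by
  induction m with
  | zero =>
    intro α _ _ h
    have : IsEmpty α := Fintype.card_eq_zero_iff.mp (by omega)
    rw [card_fpf_of_isEmpty this]
    simp
  | succ m ih =>
    intro α _ _ hcard
    classical
    have hne : Nonempty α := Fintype.card_pos_iff.mp (by omega)
    obtain ⟨x₀⟩ := hne
    have hbeta : ∀ y : α, y ≠ x₀ → Fintype.card {z : α // z ≠ x₀ ∧ z ≠ y} = 2 * m := by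
      intro y hy
      rw [Fintype.card_subtype]
      have h2 : (Finset.univ.filter fun z : α => z ≠ x₀ ∧ z ≠ y)
          = Finset.univ \ {x₀, y} := by
        ext z; simp [and_comm]
      rw [h2, Finset.card_sdiff_of_subset (Finset.subset_univ _), Finset.card_univ, hcard,
        Finset.card_insert_of_notMem (by simp [Ne.symm hy]), Finset.card_singleton]
      omega
    have hfib : ∀ y : α, y ≠ x₀ →
        Nat.card {f : Equiv.Perm α // IsFPFInvolution f ∧ f x₀ = y}
          * (2 ^ m * m.factorial) = (2 * m).factorial := by
      intro y hy
      rw [Nat.card_congr (fiberEquiv x₀ y hy)]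
      exact ih _ (hbeta y hy)
    have hsum : Nat.card {f : Equiv.Perm α // IsFPFInvolution f}
        = ∑ y ∈ Finset.univ.filter (fun y : α => y ≠ x₀),
            Nat.card {f : Equiv.Perm α // IsFPFInvolution f ∧ f x₀ = y} := by
      rw [Nat.card_eq_fintype_card, Fintype.card_subtype]
      rw [Finset.card_eq_sum_card_fiberwise
        (f := fun f : Equiv.Perm α => f x₀)
        (t := Finset.univ.filter (fun y : α => y ≠ x₀))
        (by
          intro f hf
          simp only [Finset.mem_filter, Finset.mem_univ, true_and] at hf ⊢
          exact Finset.mem_coe.mpr (Finset.mem_filter.mpr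
            ⟨Finset.mem_univ _, (Finset.mem_filter.mp hf).2.2 x₀⟩))]
      apply Finset.sum_congr rfl
      intro y _
      rw [Nat.card_eq_fintype_card, Fintype.card_subtype, Finset.filter_filter]
    have hcy : (Finset.univ.filter (fun y : α => y ≠ x₀)).card = 2 * m + 1 := by
      rw [Finset.filter_ne', Finset.card_erase_of_mem (Finset.mem_univ _),
        Finset.card_univ, hcard]
      omega
    rw [hsum, Finset.sum_mul]
    calc (∑ y ∈ Finset.univ.filter (fun y : α => y ≠ x₀),
            Nat.card {f : Equiv.Perm α // IsFPFInvolution f ∧ f x₀ = y}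
              * (2 ^ (m+1) * (m+1).factorial))
        = ∑ y ∈ Finset.univ.filter (fun y : α => y ≠ x₀),
            (2 * m).factorial * (2 * (m+1)) := by
          apply Finset.sum_congr rfl
          intro y hy
          simp only [Finset.mem_filter] at hy
          rw [← hfib y hy.2, Nat.factorial_succ]
          ring
      _ = (2 * m + 1) * ((2 * m).factorial * (2 * (m+1))) := by
          rw [Finset.sum_const, hcy, smul_eq_mul]
      _ = (2 * (m+1)).factorial := by
          have h1 : 2 * (m + 1) = (2 * m + 1) + 1 := by ring
          rw [h1, Nat.factorial_succ, Nat.factorial_succ]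
          ring

section Split

variable {α : Type} [DecidableEq α] (p : α → Prop) [DecidablePred p]

/-- FPF involutions leaving `p` invariant split into FPF involutions of the parts. -/
def splitEquiv :
    {f : Equiv.Perm α // IsFPFInvolution f ∧ ∀ x, p x → p (f x)} ≃
      {g : Equiv.Perm {x // p x} // IsFPFInvolution g} ×
        {h : Equiv.Perm {x // ¬ p x} // IsFPFInvolution h} where
  toFun := fun ⟨f, hf, hinv⟩ => by
    have hp : ∀ x, p x ↔ p (f x) := by
      intro x
      constructor
      · exact hinv x
      · intro hx
        have := hinv (f x) hx
        rwa [hf.1 x] at this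
    have hp' : ∀ x, ¬ p x ↔ ¬ p (f x) := fun x => not_iff_not.mpr (hp x)
    exact ⟨⟨f.subtypePerm (fun x => (hp x).symm), fun ⟨z, hz⟩ => Subtype.ext (hf.1 z),
            fun ⟨z, hz⟩ hc => hf.2 z (congrArg Subtype.val hc)⟩,
          ⟨f.subtypePerm (fun x => (hp' x).symm), fun ⟨z, hz⟩ => Subtype.ext (hf.1 z),
            fun ⟨z, hz⟩ hc => hf.2 z (congrArg Subtype.val hc)⟩⟩
  invFun := fun ⟨⟨g, hg⟩, ⟨h, hh⟩⟩ => by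
    refine ⟨g.subtypeCongr h, ⟨?_, ?_⟩, ?_⟩
    · intro x
      by_cases hx : p x
      · rw [Equiv.Perm.subtypeCongr.left_apply g h hx,
          Equiv.Perm.subtypeCongr.left_apply g h (g ⟨x, hx⟩).property,
          Subtype.coe_eta, hg.1]
      · rw [Equiv.Perm.subtypeCongr.right_apply g h hx,
          Equiv.Perm.subtypeCongr.right_apply g h (h ⟨x, hx⟩).property,
          Subtype.coe_eta, hh.1]
    · intro x
      by_cases hx : p x
      · rw [Equiv.Perm.subtypeCongr.left_apply g h hx]
        exact fun hc => hg.2 ⟨x, hx⟩ (Subtype.ext hc)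
      · rw [Equiv.Perm.subtypeCongr.right_apply g h hx]
        exact fun hc => hh.2 ⟨x, hx⟩ (Subtype.ext hc)
    · intro x hx
      rw [Equiv.Perm.subtypeCongr.left_apply g h hx]
      exact (g ⟨x, hx⟩).property
  left_inv := by
    rintro ⟨f, hf, hinv⟩
    apply Subtype.ext
    ext x
    simp only
    by_cases hx : p x
    · rw [Equiv.Perm.subtypeCongr.left_apply _ _ hx]
      rfl
    · rw [Equiv.Perm.subtypeCongr.right_apply _ _ hx]
      rfl
  right_inv := by
    rintro ⟨⟨g, hg⟩, ⟨h, hh⟩⟩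
    simp only [Prod.mk.injEq]
    constructor
    · apply Subtype.ext
      ext ⟨x, hx⟩
      simp only [Equiv.Perm.subtypePerm_apply]
      rw [Equiv.Perm.subtypeCongr.left_apply g h hx]
    · apply Subtype.ext
      ext ⟨x, hx⟩
      simp only [Equiv.Perm.subtypePerm_apply]
      rw [Equiv.Perm.subtypeCongr.right_apply g h hx]

end Split

/-- Counting FPF involutions leaving a finset `U` invariant. -/
lemma card_fpf_invariant {α : Type} [Fintype α] [DecidableEq α] (U : Finset α)
    (u N : ℕ) (hU : U.card = 2 * u) (hα : Fintype.card α = 2 * N) (huN : u ≤ N) :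
    Nat.card {f : Equiv.Perm α // IsFPFInvolution f ∧ ∀ x ∈ U, f x ∈ U}
        * ((2 ^ u * u.factorial) * (2 ^ (N - u) * (N - u).factorial))
      = (2 * u).factorial * (2 * (N - u)).factorial := by
  classical
  have e := splitEquiv (α := α) (fun x => x ∈ U)
  have hcard1 : Fintype.card {x : α // x ∈ U} = 2 * u := by
    have := Fintype.card_coe U
    simpa using this.trans hU
  have hcard2 : Fintype.card {x : α // ¬ x ∈ U} = 2 * (N - u) := by
    rw [Fintype.card_subtype_compl, hcard1, hα]
    omega
  have : Nat.card {f : Equiv.Perm α // IsFPFInvolution f ∧ ∀ x ∈ U, f x ∈ U}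
      = Nat.card {g : Equiv.Perm {x : α // x ∈ U} // IsFPFInvolution g}
        * Nat.card {h : Equiv.Perm {x : α // ¬ x ∈ U} // IsFPFInvolution h} := by
    rw [Nat.card_congr e, Nat.card_prod]
  rw [this]
  have h1 := card_fpf_mul u {x : α // x ∈ U} hcard1
  have h2 := card_fpf_mul (N - u) {x : α // ¬ x ∈ U} hcard2
  calc Nat.card {g : Equiv.Perm {x : α // x ∈ U} // IsFPFInvolution g}
        * Nat.card {h : Equiv.Perm {x : α // ¬ x ∈ U} // IsFPFInvolution h}
        * ((2 ^ u * u.factorial) * (2 ^ (N - u) * (N - u).factorial))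
      = (Nat.card {g : Equiv.Perm {x : α // x ∈ U} // IsFPFInvolution g}
          * (2 ^ u * u.factorial))
        * (Nat.card {h : Equiv.Perm {x : α // ¬ x ∈ U} // IsFPFInvolution h}
          * (2 ^ (N - u) * (N - u).factorial)) := by ring
    _ = (2 * u).factorial * (2 * (N - u)).factorial := by rw [h1, h2]

section Invariant

variable {α : Type} [DecidableEq α] (f : Equiv.Perm α)

lemma erase_pair_invariant (hf : IsFPFInvolution f) {V : Finset α} (hinv : ∀ x ∈ V, f x ∈ V) {x : α} (hx : x ∈ V) :
    ∀ z ∈ (V.erase x).erase (f x), f z ∈ (V.erase x).erase (f x) := by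
  intro z hz
  rw [Finset.mem_erase, Finset.mem_erase] at hz ⊢
  obtain ⟨hz1, hz2, hz3⟩ := hz
  refine ⟨?_, ?_, hinv z hz3⟩
  · intro hc
    exact hz2 (f.injective hc)
  · intro hc
    apply hz1
    rw [← hf.1 z, hc]

lemma even_card_invariant (hf : IsFPFInvolution f) : ∀ (n : ℕ) (V : Finset α), V.card = n →
    (∀ x ∈ V, f x ∈ V) → Even V.card := by
  intro n
  induction n using Nat.strong_induction_on with
  | _ n ih =>
    intro V hcard hinv
    rcases V.eq_empty_or_nonempty with h | h
    · simp [h]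
    · obtain ⟨x, hx⟩ := h
      have hfx : f x ∈ V.erase x := Finset.mem_erase.mpr ⟨hf.2 x, hinv x hx⟩
      have h1 : (V.erase x).card = n - 1 := by rw [Finset.card_erase_of_mem hx, hcard]
      have h2 : ((V.erase x).erase (f x)).card = n - 2 := by
        rw [Finset.card_erase_of_mem hfx, h1]
        omega
      have hn2 : 2 ≤ n := by
        have := Finset.card_pos.mpr ⟨f x, hfx⟩
        omega
      have := ih (n - 2) (by omega) _ h2 (erase_pair_invariant f hf hinv hx)
      rw [h2] at this
      rw [hcard]
      obtain ⟨t, ht⟩ := this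
      exact ⟨t + 1, by omega⟩

lemma exists_invariant_subset (hf : IsFPFInvolution f) : ∀ (u : ℕ) (V : Finset α),
    (∀ x ∈ V, f x ∈ V) → 2 * u ≤ V.card →
    ∃ U, U ⊆ V ∧ (∀ x ∈ U, f x ∈ U) ∧ U.card = 2 * u := by
  intro u
  induction u with
  | zero => exact fun V _ _ => ⟨∅, Finset.empty_subset V, by simp, by simp⟩
  | succ u ih =>
    intro V hinv hcard
    have hne : V.Nonempty := Finset.card_pos.mp (by omega)
    obtain ⟨x, hx⟩ := hne
    have hfx : f x ∈ V.erase x := Finset.mem_erase.mpr ⟨hf.2 x, hinv x hx⟩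
    have h2 : ((V.erase x).erase (f x)).card = V.card - 2 := by
      rw [Finset.card_erase_of_mem hfx, Finset.card_erase_of_mem hx]
      omega
    obtain ⟨U', hU'sub, hU'inv, hU'card⟩ := ih _ (erase_pair_invariant f hf hinv hx)
      (by omega)
    have hxU' : x ∉ U' := fun hc => (Finset.mem_erase.mp (Finset.mem_erase.mp
      (hU'sub hc)).2).1 rfl
    have hfxU' : f x ∉ U' := fun hc => (Finset.mem_erase.mp (hU'sub hc)).1 rfl
    refine ⟨insert x (insert (f x) U'), ?_, ?_, ?_⟩
    · intro z hz
      rcases Finset.mem_insert.mp hz with h | hz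
      · rwa [h]
      · rcases Finset.mem_insert.mp hz with h | hz
        · rw [h]; exact hinv x hx
        · exact (Finset.erase_subset _ _) ((Finset.erase_subset _ _) (hU'sub hz))
    · intro z hz
      rcases Finset.mem_insert.mp hz with h | hz
      · rw [h]
        exact Finset.mem_insert_of_mem (Finset.mem_insert_self _ _)
      · rcases Finset.mem_insert.mp hz with h | hz
        · rw [h, hf.1]
          exact Finset.mem_insert_self _ _
        · exact Finset.mem_insert_of_mem (Finset.mem_insert_of_mem (hU'inv z hz))
    · rw [Finset.card_insert_of_notMem, Finset.card_insert_of_notMem hfxU', hU'card]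
      · ring
      · intro hc
        rcases Finset.mem_insert.mp hc with h | h
        · exact hf.2 x h.symm
        · exact hxU' h

end Invariant

/-- Threshold for the number of crossing half-edges. -/
def kk (s : ℕ) : ℕ := (s - 1) / 100

/-- Half the size of the internal invariant set we extract. -/
def uu (s : ℕ) : ℕ := (3 * s - kk s + 1) / 2

lemma kk_le (s : ℕ) : 100 * kk s ≤ s - 1 ∧ s - 1 < 100 * kk s + 100 := by
  unfold kk
  omega

lemma uu_bounds (s : ℕ) : 3 * s - kk s ≤ 2 * uu s ∧ 2 * uu s ≤ 3 * s - kk s + 1 := by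
  unfold uu
  omega

lemma badS_subset (n : ℕ) (f : Equiv.Perm (HalfEdges n)) (hf : IsFPFInvolution f)
    (S : Finset (Fin (2 * n))) (hs : 1 ≤ S.card)
    (hcut : 100 * (Finset.univ.filter
        (fun x : HalfEdges n => x.1 ∈ S ∧ (f x).1 ∉ S)).card < S.card) :
    ∃ U ∈ Finset.powersetCard (2 * uu S.card)
        (Finset.univ.filter fun x : HalfEdges n => x.1 ∈ S),
      ∀ x ∈ U, f x ∈ U := by
  classical
  set s := S.card with hsdef
  set T : Finset (HalfEdges n) := Finset.univ.filter (fun x => x.1 ∈ S) with hT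
  set U₀ : Finset (HalfEdges n) :=
    Finset.univ.filter (fun x => x.1 ∈ S ∧ (f x).1 ∈ S) with hU₀
  have hTcard : T.card = 3 * s := by
    have : T = S ×ˢ (Finset.univ : Finset (Fin 3)) := by
      ext ⟨a, b⟩
      simp [hT, Finset.mem_product]
    rw [this, Finset.card_product]
    simp [hsdef, mul_comm]
  have hinv : ∀ x ∈ U₀, f x ∈ U₀ := by
    intro x hx
    simp only [hU₀, Finset.mem_filter, Finset.mem_univ, true_and] at hx ⊢
    exact ⟨hx.2, by rw [hf.1 x]; exact hx.1⟩
  have hsplit : U₀.card + (Finset.univ.filter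
      (fun x : HalfEdges n => x.1 ∈ S ∧ (f x).1 ∉ S)).card = 3 * s := by
    rw [← hTcard]
    have h1 : U₀ = T.filter (fun x => (f x).1 ∈ S) := by
      ext x; simp [hU₀, hT, Finset.mem_filter, and_assoc]
    have h2 : (Finset.univ.filter (fun x : HalfEdges n => x.1 ∈ S ∧ (f x).1 ∉ S))
        = T.filter (fun x => ¬ (f x).1 ∈ S) := by
      ext x; simp [hT, Finset.mem_filter, and_assoc]
    rw [h1, h2]
    exact Finset.card_filter_add_card_filter_not _
  have heven : Even U₀.card := even_card_invariant f hf U₀.card U₀ rfl hinv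
  have h2u : 2 * uu s ≤ U₀.card := by
    obtain ⟨t, ht⟩ := heven
    have h1 := uu_bounds s
    have h2 := kk_le s
    omega
  obtain ⟨U, hUsub, hUinv, hUcard⟩ := exists_invariant_subset f hf (uu s) U₀ hinv h2u
  refine ⟨U, Finset.mem_powersetCard.mpr ⟨?_, hUcard⟩, hUinv⟩
  intro x hx
  have := hUsub hx
  simp only [hU₀, Finset.mem_filter, Finset.mem_univ, true_and] at this
  simp [hT, this.1]

lemma filter_card_eq_nat_card {β : Type} [Fintype β] (p : β → Prop) [DecidablePred p] :
    (Finset.univ.filter p).card = Nat.card {x // p x} := by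
  rw [Nat.card_eq_fintype_card, Fintype.card_subtype]

lemma card_halfEdges (n : ℕ) : Fintype.card (HalfEdges n) = 2 * (3 * n) := by
  simp [HalfEdges]
  ring

lemma card_badS (n : ℕ) (hn : 1 ≤ n) (S : Finset (Fin (2 * n)))
    (hS1 : 1 ≤ S.card) (hSn : S.card ≤ n) :
    (Finset.univ.filter (fun f : Equiv.Perm (HalfEdges n) =>
        IsFPFInvolution f ∧ 100 * (Finset.univ.filter
          (fun x : HalfEdges n => x.1 ∈ S ∧ (f x).1 ∉ S)).card < S.card)).card
      * ((2 ^ uu S.card * (uu S.card).factorial)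
          * (2 ^ (3 * n - uu S.card) * (3 * n - uu S.card).factorial))
    ≤ (3 * S.card).choose (2 * uu S.card)
      * ((2 * uu S.card).factorial * (2 * (3 * n - uu S.card)).factorial) := by
  classical
  set s := S.card with hsdef
  set u := uu s with hudef
  have hu3n : u ≤ 3 * n := by
    have h1 := uu_bounds s
    have h2 := kk_le s
    omega
  set T : Finset (HalfEdges n) := Finset.univ.filter (fun x => x.1 ∈ S) with hT
  have hsub : (Finset.univ.filter (fun f : Equiv.Perm (HalfEdges n) =>
      IsFPFInvolution f ∧ 100 * (Finset.univ.filter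
        (fun x : HalfEdges n => x.1 ∈ S ∧ (f x).1 ∉ S)).card < S.card))
      ⊆ (Finset.powersetCard (2 * u) T).biUnion (fun U =>
          Finset.univ.filter (fun f : Equiv.Perm (HalfEdges n) =>
            IsFPFInvolution f ∧ ∀ x ∈ U, f x ∈ U)) := by
    intro f hfmem
    simp only [Finset.mem_filter, Finset.mem_univ, true_and] at hfmem
    obtain ⟨hf, hcut⟩ := hfmem
    obtain ⟨U, hU, hUinv⟩ := badS_subset n f hf S hS1 hcut
    apply Finset.mem_biUnion.mpr
    refine ⟨U, hU, ?_⟩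
    simp only [Finset.mem_filter, Finset.mem_univ, true_and]
    exact ⟨hf, hUinv⟩
  calc (Finset.univ.filter (fun f : Equiv.Perm (HalfEdges n) =>
        IsFPFInvolution f ∧ 100 * (Finset.univ.filter
          (fun x : HalfEdges n => x.1 ∈ S ∧ (f x).1 ∉ S)).card < S.card)).card
        * ((2 ^ u * u.factorial) * (2 ^ (3 * n - u) * (3 * n - u).factorial))
      ≤ ((Finset.powersetCard (2 * u) T).biUnion (fun U =>
          Finset.univ.filter (fun f : Equiv.Perm (HalfEdges n) =>
            IsFPFInvolution f ∧ ∀ x ∈ U, f x ∈ U))).card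
        * ((2 ^ u * u.factorial) * (2 ^ (3 * n - u) * (3 * n - u).factorial)) :=
        Nat.mul_le_mul_right _ (Finset.card_le_card hsub)
    _ ≤ (∑ U ∈ Finset.powersetCard (2 * u) T,
          (Finset.univ.filter (fun f : Equiv.Perm (HalfEdges n) =>
            IsFPFInvolution f ∧ ∀ x ∈ U, f x ∈ U)).card)
        * ((2 ^ u * u.factorial) * (2 ^ (3 * n - u) * (3 * n - u).factorial)) :=
        Nat.mul_le_mul_right _ (Finset.card_biUnion_le)
    _ = ∑ U ∈ Finset.powersetCard (2 * u) T,
          ((Finset.univ.filter (fun f : Equiv.Perm (HalfEdges n) =>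
            IsFPFInvolution f ∧ ∀ x ∈ U, f x ∈ U)).card
          * ((2 ^ u * u.factorial) * (2 ^ (3 * n - u) * (3 * n - u).factorial))) :=
        Finset.sum_mul _ _ _
    _ = ∑ U ∈ Finset.powersetCard (2 * u) T,
          ((2 * u).factorial * (2 * (3 * n - u)).factorial) := by
        apply Finset.sum_congr rfl
        intro U hU
        rw [filter_card_eq_nat_card]
        exact card_fpf_invariant U u (3 * n)
          (Finset.mem_powersetCard.mp hU).2 (card_halfEdges n) hu3n
    _ = (Finset.powersetCard (2 * u) T).card
          * ((2 * u).factorial * (2 * (3 * n - u)).factorial) := by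
        rw [Finset.sum_const, smul_eq_mul]
    _ ≤ (3 * S.card).choose (2 * u)
          * ((2 * u).factorial * (2 * (3 * n - u)).factorial) := by
        apply Nat.mul_le_mul_right
        rw [Finset.card_powersetCard]
        apply Nat.choose_le_choose
        -- T.card = 3 * s
        have : T = S ×ˢ (Finset.univ : Finset (Fin 3)) := by
          ext ⟨a, b⟩
          simp [hT, Finset.mem_product]
        rw [this, Finset.card_product]
        simp [hsdef, mul_comm]

lemma ratio_id (n u : ℕ) (hu : u ≤ 3 * n) :
    (2 * u).factorial * (2 * (3 * n - u)).factorial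
        * (2 ^ (3 * n) * (3 * n).factorial) * (6 * n).choose (2 * u)
      = (2 ^ u * u.factorial) * (2 ^ (3 * n - u) * (3 * n - u).factorial)
        * (6 * n).factorial * (3 * n).choose u := by
  have h1 : 2 * (3 * n - u) = 6 * n - 2 * u := by omega
  have h2 : 2 * u ≤ 6 * n := by omega
  have e1 := Nat.choose_mul_factorial_mul_factorial h2
  have e2 := Nat.choose_mul_factorial_mul_factorial hu
  have e3 : (2:ℕ) ^ u * 2 ^ (3 * n - u) = 2 ^ (3 * n) := by
    rw [← pow_add]
    congr 1
    omega
  calc (2 * u).factorial * (2 * (3 * n - u)).factorial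
        * (2 ^ (3 * n) * (3 * n).factorial) * (6 * n).choose (2 * u)
      = ((6 * n).choose (2 * u) * (2 * u).factorial * (6 * n - 2 * u).factorial)
        * (2 ^ (3 * n) * (3 * n).factorial) := by rw [h1]; ring
    _ = (6 * n).factorial * (2 ^ (3 * n) * (3 * n).factorial) := by rw [e1]
    _ = ((3 * n).choose u * u.factorial * (3 * n - u).factorial)
        * (2 ^ (3 * n) * (6 * n).factorial) := by rw [e2]; ring
    _ = (2 ^ u * u.factorial) * (2 ^ (3 * n - u) * (3 * n - u).factorial)
        * (6 * n).factorial * (3 * n).choose u := by rw [← e3]; ring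

/-- The number of fixed-point-free involutions on the half-edge set. -/
lemma omega_card_mul (n : ℕ) :
    (Finset.univ.filter (fun f : Equiv.Perm (HalfEdges n) => IsFPFInvolution f)).card
        * (2 ^ (3 * n) * (3 * n).factorial) = (2 * (3 * n)).factorial := by
  rw [filter_card_eq_nat_card]
  exact card_fpf_mul (3 * n) (HalfEdges n) (card_halfEdges n)

lemma omega_card_pos (n : ℕ) :
    0 < (Finset.univ.filter
      (fun f : Equiv.Perm (HalfEdges n) => IsFPFInvolution f)).card := by
  by_contra h
  have h0 : (Finset.univ.filter
      (fun f : Equiv.Perm (HalfEdges n) => IsFPFInvolution f)).card = 0 := by omega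
  have := omega_card_mul n
  rw [h0, Nat.zero_mul] at this
  exact (Nat.factorial_pos _).ne' this.symm

/-- Per-`S` bound, normalized by the total number of FPF involutions. -/
lemma card_badS_omega (n : ℕ) (hn : 1 ≤ n) (S : Finset (Fin (2 * n)))
    (hS1 : 1 ≤ S.card) (hSn : S.card ≤ n) :
    (Finset.univ.filter (fun f : Equiv.Perm (HalfEdges n) =>
        IsFPFInvolution f ∧ 100 * (Finset.univ.filter
          (fun x : HalfEdges n => x.1 ∈ S ∧ (f x).1 ∉ S)).card < S.card)).card
      * (6 * n).choose (2 * uu S.card)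
    ≤ (3 * S.card).choose (2 * uu S.card)
      * (Finset.univ.filter
          (fun f : Equiv.Perm (HalfEdges n) => IsFPFInvolution f)).card
      * (3 * n).choose (uu S.card) := by
  set s := S.card
  set u := uu s with hudef
  have hu3n : u ≤ 3 * n := by
    have h1 := uu_bounds s
    have h2 := kk_le s
    omega
  have key := card_badS n hn S hS1 hSn
  set K : ℕ := (2 ^ u * u.factorial) * (2 ^ (3 * n - u) * (3 * n - u).factorial) with hK
  have hKpos : 0 < K := by positivity
  have hP : 0 < 2 ^ (3 * n) * (3 * n).factorial := by positivity
  -- multiply key by choose (6n) (2u) and use ratio_id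
  apply Nat.le_of_mul_le_mul_right _ hKpos
  apply Nat.le_of_mul_le_mul_right _ hP
  calc (Finset.univ.filter (fun f : Equiv.Perm (HalfEdges n) =>
        IsFPFInvolution f ∧ 100 * (Finset.univ.filter
          (fun x : HalfEdges n => x.1 ∈ S ∧ (f x).1 ∉ S)).card < S.card)).card
        * (6 * n).choose (2 * u) * K * (2 ^ (3 * n) * (3 * n).factorial)
      = ((Finset.univ.filter (fun f : Equiv.Perm (HalfEdges n) =>
          IsFPFInvolution f ∧ 100 * (Finset.univ.filter
            (fun x : HalfEdges n => x.1 ∈ S ∧ (f x).1 ∉ S)).card < S.card)).card * K)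
        * ((6 * n).choose (2 * u) * (2 ^ (3 * n) * (3 * n).factorial)) := by ring
    _ ≤ ((3 * s).choose (2 * u)
          * ((2 * u).factorial * (2 * (3 * n - u)).factorial))
        * ((6 * n).choose (2 * u) * (2 ^ (3 * n) * (3 * n).factorial)) :=
        Nat.mul_le_mul_right _ key
    _ = (3 * s).choose (2 * u)
        * ((2 * u).factorial * (2 * (3 * n - u)).factorial
            * (2 ^ (3 * n) * (3 * n).factorial) * (6 * n).choose (2 * u)) := by ring
    _ = (3 * s).choose (2 * u)
        * (K * (6 * n).factorial * (3 * n).choose u) := by rw [ratio_id n u hu3n, hK]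
    _ = (3 * s).choose (2 * u) * (3 * n).choose u * K * (6 * n).factorial := by ring
    _ = (3 * s).choose (2 * u) * (3 * n).choose u * K * (2 * (3 * n)).factorial := by
        congr 2
        omega
    _ = (3 * s).choose (2 * u)
        * (Finset.univ.filter
            (fun f : Equiv.Perm (HalfEdges n) => IsFPFInvolution f)).card
        * (3 * n).choose u * K * (2 ^ (3 * n) * (3 * n).factorial) := by
        rw [← omega_card_mul n]
        ring

lemma uu_le_6n {s n : ℕ} (hn : 1 ≤ n) (hsn : s ≤ n) : 2 * uu s ≤ 6 * n := by
  have h1 := uu_bounds s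
  have h2 := kk_le s
  omega

lemma total_bound (n : ℕ) (hn : 1 ≤ n) :
    ((Finset.univ.filter (fun f : Equiv.Perm (HalfEdges n) =>
        IsFPFInvolution f ∧ ∃ S : Finset (Fin (2 * n)), S.Nonempty ∧ S.card ≤ n ∧
          100 * (Finset.univ.filter
            (fun x : HalfEdges n => x.1 ∈ S ∧ (f x).1 ∉ S)).card < S.card)).card : ℝ)
    ≤ ((Finset.univ.filter
          (fun f : Equiv.Perm (HalfEdges n) => IsFPFInvolution f)).card : ℝ)
      * ∑ s ∈ Finset.Icc 1 n,
          ((2 * n).choose s : ℝ) * ((3 * s).choose (2 * uu s))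
            * ((3 * n).choose (uu s)) / ((6 * n).choose (2 * uu s)) := by
  classical
  have hsub : (Finset.univ.filter (fun f : Equiv.Perm (HalfEdges n) =>
      IsFPFInvolution f ∧ ∃ S : Finset (Fin (2 * n)), S.Nonempty ∧ S.card ≤ n ∧
        100 * (Finset.univ.filter
          (fun x : HalfEdges n => x.1 ∈ S ∧ (f x).1 ∉ S)).card < S.card))
      ⊆ (Finset.Icc 1 n).biUnion (fun s =>
          (Finset.powersetCard s (Finset.univ : Finset (Fin (2 * n)))).biUnion (fun S =>
            Finset.univ.filter (fun f : Equiv.Perm (HalfEdges n) =>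
              IsFPFInvolution f ∧ 100 * (Finset.univ.filter
                (fun x : HalfEdges n => x.1 ∈ S ∧ (f x).1 ∉ S)).card < S.card))) := by
    intro f hf
    simp only [Finset.mem_filter, Finset.mem_univ, true_and] at hf
    obtain ⟨hf1, S, hS1, hS2, hS3⟩ := hf
    apply Finset.mem_biUnion.mpr
    refine ⟨S.card, Finset.mem_Icc.mpr ⟨Finset.card_pos.mpr hS1, hS2⟩, ?_⟩
    apply Finset.mem_biUnion.mpr
    refine ⟨S, Finset.mem_powersetCard.mpr ⟨Finset.subset_univ _, rfl⟩, ?_⟩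
    simp only [Finset.mem_filter, Finset.mem_univ, true_and]
    exact ⟨hf1, hS3⟩
  have hnat : (Finset.univ.filter (fun f : Equiv.Perm (HalfEdges n) =>
      IsFPFInvolution f ∧ ∃ S : Finset (Fin (2 * n)), S.Nonempty ∧ S.card ≤ n ∧
        100 * (Finset.univ.filter
          (fun x : HalfEdges n => x.1 ∈ S ∧ (f x).1 ∉ S)).card < S.card)).card
      ≤ ∑ s ∈ Finset.Icc 1 n,
          ∑ S ∈ Finset.powersetCard s (Finset.univ : Finset (Fin (2 * n))),
            (Finset.univ.filter (fun f : Equiv.Perm (HalfEdges n) =>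
              IsFPFInvolution f ∧ 100 * (Finset.univ.filter
                (fun x : HalfEdges n => x.1 ∈ S ∧ (f x).1 ∉ S)).card < S.card)).card := by
    refine le_trans (Finset.card_le_card hsub) ?_
    refine le_trans Finset.card_biUnion_le ?_
    exact Finset.sum_le_sum (fun s _ => Finset.card_biUnion_le)
  have hcast : ((Finset.univ.filter (fun f : Equiv.Perm (HalfEdges n) =>
      IsFPFInvolution f ∧ ∃ S : Finset (Fin (2 * n)), S.Nonempty ∧ S.card ≤ n ∧
        100 * (Finset.univ.filter
          (fun x : HalfEdges n => x.1 ∈ S ∧ (f x).1 ∉ S)).card < S.card)).card : ℝ)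
      ≤ ∑ s ∈ Finset.Icc 1 n,
          ∑ S ∈ Finset.powersetCard s (Finset.univ : Finset (Fin (2 * n))),
            ((Finset.univ.filter (fun f : Equiv.Perm (HalfEdges n) =>
              IsFPFInvolution f ∧ 100 * (Finset.univ.filter
                (fun x : HalfEdges n => x.1 ∈ S ∧ (f x).1 ∉ S)).card < S.card)).card : ℝ) := by
    exact_mod_cast hnat
  refine le_trans hcast ?_
  rw [Finset.mul_sum]
  apply Finset.sum_le_sum
  intro s hs
  rw [Finset.mem_Icc] at hs
  have h6 : 0 < ((6 * n).choose (2 * uu s)) :=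
    Nat.choose_pos (uu_le_6n hn hs.2)
  have hSbound : ∀ S ∈ Finset.powersetCard s (Finset.univ : Finset (Fin (2 * n))),
      ((Finset.univ.filter (fun f : Equiv.Perm (HalfEdges n) =>
        IsFPFInvolution f ∧ 100 * (Finset.univ.filter
          (fun x : HalfEdges n => x.1 ∈ S ∧ (f x).1 ∉ S)).card < S.card)).card : ℝ)
      ≤ ((3 * s).choose (2 * uu s) : ℝ)
        * ((Finset.univ.filter
            (fun f : Equiv.Perm (HalfEdges n) => IsFPFInvolution f)).card : ℝ)
        * ((3 * n).choose (uu s)) / ((6 * n).choose (2 * uu s)) := by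
    intro S hS
    have hcard : S.card = s := (Finset.mem_powersetCard.mp hS).2
    have key := card_badS_omega n hn S (by omega) (by omega)
    rw [hcard] at key
    rw [hcard, le_div_iff₀ (by exact_mod_cast h6)]
    exact_mod_cast key
  refine le_trans (Finset.sum_le_sum hSbound) ?_
  rw [Finset.sum_const, Finset.card_powersetCard, Finset.card_univ, Fintype.card_fin,
    nsmul_eq_mul]
  apply le_of_eq
  ring
/-- Lower bound `(n/d)^d ≤ C(n,d)`. -/
lemma choose_lower (n d : ℕ) (hd : d ≤ n) :
    ((n : ℝ) / d) ^ d ≤ (n.choose d : ℝ) := by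
  rcases Nat.eq_zero_or_pos d with h0 | hdpos
  · subst h0; simp
  have hprod : (n.choose d : ℝ) * d.factorial
      = ∏ i ∈ Finset.range d, ((n : ℝ) - i) := by
    have h1 : (n.descFactorial d : ℝ) = ∏ i ∈ Finset.range d, ((n : ℝ) - i) := by
      rw [Nat.descFactorial_eq_prod_range]
      push_cast
      apply Finset.prod_congr rfl
      intro i hi
      have : i ≤ n := le_trans (Nat.le_of_lt_succ (Nat.lt_succ_of_lt
        (Finset.mem_range.mp hi))) hd
      push_cast [Nat.cast_sub this]
      ring
    rw [← h1, Nat.descFactorial_eq_factorial_mul_choose]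
    push_cast
    ring
  have hfac : (d.factorial : ℝ) = ∏ i ∈ Finset.range d, ((d : ℝ) - i) := by
    have : ∏ i ∈ Finset.range d, ((d : ℝ) - i) = ∏ i ∈ Finset.range d, ((i : ℝ) + 1) := by
      rw [← Finset.prod_range_reflect]
      apply Finset.prod_congr rfl
      intro i hi
      rw [Finset.mem_range] at hi
      have h1 : d - 1 - i = d - (i + 1) := by omega
      rw [h1, Nat.cast_sub (by omega)]
      push_cast
      ring
    rw [this]
    rw [← Finset.prod_range_add_one_eq_factorial]
    push_cast
    rfl
  have hstep : ((n : ℝ) / d) ^ d * d.factorial ≤ (n.choose d : ℝ) * d.factorial := by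
    rw [hprod]
    calc ((n : ℝ) / d) ^ d * d.factorial
        = ∏ i ∈ Finset.range d, (((n : ℝ) / d) * ((d : ℝ) - i)) := by
          rw [Finset.prod_mul_distrib, Finset.prod_const, Finset.card_range, ← hfac]
      _ ≤ ∏ i ∈ Finset.range d, ((n : ℝ) - i) := by
          apply Finset.prod_le_prod
          · intro i hi
            rw [Finset.mem_range] at hi
            have hdr : (0:ℝ) < d := by exact_mod_cast hdpos
            have hin : (i : ℝ) < d := by exact_mod_cast hi
            have hnn : (0:ℝ) ≤ n := by positivity
            apply mul_nonneg (by positivity)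
            linarith
          · intro i hi
            rw [Finset.mem_range] at hi
            have hdr : (0:ℝ) < d := by exact_mod_cast hdpos
            have hin : (i : ℝ) < d := by exact_mod_cast hi
            have hnn : (d : ℝ) ≤ n := by exact_mod_cast hd
            rw [div_mul_eq_mul_div, div_le_iff₀ hdr]
            nlinarith
  have hfpos : (0:ℝ) < d.factorial := by positivity
  exact le_of_mul_le_mul_right hstep hfpos

/-- Upper bound `C(n,k) ≤ n^k / k!`. -/
lemma choose_upper (n k : ℕ) : (n.choose k : ℝ) * k.factorial ≤ (n : ℝ) ^ k := by
  have h := Nat.descFactorial_le_pow n k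
  have h2 : n.choose k * k.factorial ≤ n ^ k := by
    rw [mul_comm, ← Nat.descFactorial_eq_factorial_mul_choose]
    exact h
  exact_mod_cast h2

lemma pow_self_le_factorial_mul_exp (r : ℕ) :
    (r : ℝ) ^ r ≤ r.factorial * Real.exp 1 ^ r := by
  have h := Real.sum_le_exp_of_nonneg (x := (r : ℝ)) (by positivity) (r + 1)
  have h2 : (r : ℝ) ^ r / r.factorial ≤ Real.exp r := by
    refine le_trans ?_ h
    exact Finset.single_le_sum (f := fun i => (r:ℝ)^i / (Nat.factorial i))
      (fun i _ => by positivity) (Finset.self_mem_range_succ r)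
  rw [div_le_iff₀ (by positivity), ← Real.exp_one_pow] at h2
  linarith [h2]

/-- Key bound: `C(3s, r) ≤ (11/10)^s` whenever `100 r ≤ s`. -/
lemma choose_small (s r : ℕ) (h : 100 * r ≤ s) :
    ((3 * s).choose r : ℝ) ≤ (11 / 10) ^ s := by
  rcases Nat.eq_zero_or_pos r with h0 | hrpos
  · subst h0
    simp only [Nat.choose_zero_right, Nat.cast_one]
    apply one_le_pow₀
    norm_num
  have hrR : (0:ℝ) < r := by exact_mod_cast hrpos
  have he : (Real.exp 1) ≤ 2.7182818286 := le_of_lt Real.exp_one_lt_d9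
  have hepos : (0:ℝ) < Real.exp 1 := Real.exp_pos 1
  -- C(3s, r) ≤ (3s)^r / r! ≤ (3 s e / r)^r
  have h1 : ((3 * s).choose r : ℝ) ≤ ((3 * s : ℝ) * Real.exp 1 / r) ^ r := by
    have hu := choose_upper (3 * s) r
    have hp := pow_self_le_factorial_mul_exp r
    have hfr : (0:ℝ) < r.factorial := by positivity
    rw [div_pow, le_div_iff₀ (by positivity)]
    calc ((3 * s).choose r : ℝ) * (r:ℝ) ^ r
        ≤ ((3 * s).choose r : ℝ) * (r.factorial * Real.exp 1 ^ r) := by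
          apply mul_le_mul_of_nonneg_left hp (by positivity)
      _ = (((3 * s).choose r : ℝ) * r.factorial) * Real.exp 1 ^ r := by ring
      _ ≤ ((3 * s : ℕ) : ℝ) ^ r * Real.exp 1 ^ r := by
          apply mul_le_mul_of_nonneg_right hu (by positivity)
      _ = ((3 * s : ℝ) * Real.exp 1) ^ r := by
          rw [mul_pow]
          norm_num
  set w : ℕ := s - 100 * r with hw
  have hsw : (s : ℝ) = 100 * r + w := by
    have : s = 100 * r + w := by omega
    exact_mod_cast this
  -- 3 s e / r ≤ 900 * (1 + w / (20 r))
  have h2 : (3 * s : ℝ) * Real.exp 1 / r ≤ 900 * (1 + (w : ℝ) / (20 * r)) := by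
    rw [div_le_iff₀ hrR, hsw]
    have hwnn : (0:ℝ) ≤ w := by positivity
    have expand : (900 : ℝ) * (1 + (w : ℝ) / (20 * r)) * r = 900 * r + 45 * w := by
      field_simp
      ring
    rw [expand]
    nlinarith
  have h3 : ((3 * s : ℝ) * Real.exp 1 / r) ^ r ≤ (900 * (1 + (w : ℝ) / (20 * r))) ^ r := by
    apply pow_le_pow_left₀ (by positivity) h2
  -- (1 + w/(20r))^r ≤ exp(w/20) ≤ (11/10)^w
  have h4 : (1 + (w : ℝ) / (20 * r)) ^ r ≤ (11 / 10 : ℝ) ^ w := by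
    have ha : (1 + (w : ℝ) / (20 * r)) ^ r ≤ Real.exp ((w : ℝ) / (20 * r)) ^ r := by
      apply pow_le_pow_left₀ (by positivity)
      linarith [Real.add_one_le_exp ((w : ℝ) / (20 * r))]
    have hb : Real.exp ((w : ℝ) / (20 * r)) ^ r = Real.exp ((w : ℝ) / 20) := by
      rw [← Real.exp_nat_mul]
      congr 1
      field_simp
    have hc : Real.exp ((w : ℝ) / 20) = Real.exp (1 / 20 : ℝ) ^ w := by
      rw [← Real.exp_nat_mul]
      congr 1
      ring
    have hd : Real.exp (1 / 20 : ℝ) ≤ 11 / 10 := by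
      have h20 : Real.exp (1 / 20 : ℝ) ^ (20:ℕ) = Real.exp 1 := by
        rw [← Real.exp_nat_mul]
        norm_num
      have hgoal : Real.exp (1 / 20 : ℝ) ^ (20:ℕ) ≤ (11 / 10 : ℝ) ^ (20:ℕ) := by
        rw [h20]
        calc Real.exp 1 ≤ 2.7182818286 := he
          _ ≤ (11 / 10 : ℝ) ^ (20:ℕ) := by norm_num
      exact le_of_pow_le_pow_left₀ (by norm_num) (by norm_num) hgoal
    calc (1 + (w : ℝ) / (20 * r)) ^ r ≤ Real.exp ((w : ℝ) / (20 * r)) ^ r := ha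
      _ = Real.exp (1 / 20 : ℝ) ^ w := by rw [hb, hc]
      _ ≤ (11 / 10 : ℝ) ^ w := by
          apply pow_le_pow_left₀ (le_of_lt (Real.exp_pos _)) hd
  -- 900^r ≤ (11/10)^(100 r)
  have h5 : (900 : ℝ) ^ r ≤ (11 / 10 : ℝ) ^ (100 * r) := by
    have : ((11 / 10 : ℝ) ^ (100 : ℕ)) ^ r = (11 / 10 : ℝ) ^ (100 * r) := by
      rw [← pow_mul]
    rw [← this]
    apply pow_le_pow_left₀ (by norm_num)
    norm_num
  calc ((3 * s).choose r : ℝ)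
      ≤ ((3 * s : ℝ) * Real.exp 1 / r) ^ r := h1
    _ ≤ (900 * (1 + (w : ℝ) / (20 * r))) ^ r := h3
    _ = 900 ^ r * (1 + (w : ℝ) / (20 * r)) ^ r := mul_pow _ _ _
    _ ≤ (11 / 10 : ℝ) ^ (100 * r) * (11 / 10 : ℝ) ^ w := by
        apply mul_le_mul h5 h4 (by positivity) (by positivity)
    _ = (11 / 10 : ℝ) ^ (100 * r + w) := (pow_add _ _ _).symm
    _ = (11 / 10 : ℝ) ^ s := by
        congr 1
        omega

lemma uu_arith (s : ℕ) (hs : 1 ≤ s) :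
    s ≤ uu s ∧ 99 * s ≤ 200 * (uu s - s) ∧ 2 * (uu s - s) ≤ s + 1 ∧ 1 ≤ uu s - s
      ∧ 3 * s - 2 * uu s ≤ kk s := by
  have h1 := uu_bounds s
  have h2 := kk_le s
  omega

lemma vandermonde_ge (a b i j : ℕ) :
    a.choose i * b.choose j ≤ (a + b).choose (i + j) := by
  rw [Nat.add_choose_eq]
  exact Finset.single_le_sum (f := fun p : ℕ × ℕ => a.choose p.1 * b.choose p.2)
    (fun p _ => Nat.zero_le _) (Finset.HasAntidiagonal.mem_antidiagonal.mpr (rfl : (i, j).1 + (i, j).2 = i + j))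

lemma term_bound (n s : ℕ) (hn : 1 ≤ n) (hs1 : 1 ≤ s) (hsn : s ≤ n) :
    ((2 * n).choose s : ℝ) * ((3 * s).choose (2 * uu s))
        * ((3 * n).choose (uu s)) / ((6 * n).choose (2 * uu s))
      ≤ (1331 * ((s : ℝ) + 1) / (2000 * n)) ^ (uu s - s) := by
  have harith := uu_arith s hs1
  set u := uu s with hu
  set d := u - s with hd
  have hbase : (0:ℝ) ≤ 1331 * ((s : ℝ) + 1) / (2000 * n) := by positivity
  rcases lt_or_ge (3 * s) (2 * u) with hlt | hle
  · rw [Nat.choose_eq_zero_of_lt hlt]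
    simp only [Nat.cast_zero, mul_zero, zero_mul, zero_div]
    positivity
  -- main case: 2u ≤ 3s
  have hr : 100 * (3 * s - 2 * u) ≤ s := by
    have h2 := kk_le s
    omega
  have hB : ((3 * s).choose (2 * u) : ℝ) ≤ (11 / 10 : ℝ) ^ s := by
    rw [← Nat.choose_symm hle]
    exact choose_small s (3 * s - 2 * u) hr
  have hdn : d ≤ n := by omega
  have hu3n : u ≤ 3 * n := by omega
  have hs2n : s ≤ 2 * n := by omega
  have hC6 : ((3 * n).choose u) * ((2 * n).choose s * n.choose d) ≤ (6 * n).choose (2 * u) := by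
    have step1 : (2 * n).choose s * n.choose d ≤ (3 * n).choose u := by
      have h := vandermonde_ge (2 * n) n s d
      have e1 : 2 * n + n = 3 * n := by ring
      have e2 : s + d = u := by omega
      rwa [e1, e2] at h
    have step2 : (3 * n).choose u * (3 * n).choose u ≤ (6 * n).choose (2 * u) := by
      have h := vandermonde_ge (3 * n) (3 * n) u u
      have e1 : 3 * n + 3 * n = 6 * n := by ring
      have e2 : u + u = 2 * u := by ring
      rwa [e1, e2] at h
    calc ((3 * n).choose u) * ((2 * n).choose s * n.choose d)
        ≤ (3 * n).choose u * (3 * n).choose u :=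
          Nat.mul_le_mul_left _ step1
      _ ≤ (6 * n).choose (2 * u) := step2
  have hC3pos : (0:ℝ) < ((3 * n).choose u : ℝ) := by
    exact_mod_cast Nat.choose_pos hu3n
  have hApos : (0:ℝ) < ((2 * n).choose s : ℝ) := by
    exact_mod_cast Nat.choose_pos hs2n
  have hCnpos : (0:ℝ) < (n.choose d : ℝ) := by
    exact_mod_cast Nat.choose_pos hdn
  have hC6R : ((3 * n).choose u : ℝ) * (((2 * n).choose s : ℝ) * (n.choose d : ℝ))
      ≤ ((6 * n).choose (2 * u) : ℝ) := by exact_mod_cast hC6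
  have hBnn : (0:ℝ) ≤ ((3 * s).choose (2 * u) : ℝ) := by positivity
  have step_a : ((2 * n).choose s : ℝ) * ((3 * s).choose (2 * u))
        * ((3 * n).choose u) / ((6 * n).choose (2 * u))
      ≤ ((2 * n).choose s : ℝ) * ((3 * s).choose (2 * u))
        * ((3 * n).choose u)
        / (((3 * n).choose u : ℝ) * (((2 * n).choose s : ℝ) * (n.choose d : ℝ))) := by
    apply div_le_div_of_nonneg_left (by positivity) (by positivity) hC6R
  have step_b : ((2 * n).choose s : ℝ) * ((3 * s).choose (2 * u))
        * ((3 * n).choose u)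
        / (((3 * n).choose u : ℝ) * (((2 * n).choose s : ℝ) * (n.choose d : ℝ)))
      = ((3 * s).choose (2 * u) : ℝ) / (n.choose d : ℝ) := by
    field_simp
  have hlow := choose_lower n d hdn
  have hndpos : (0:ℝ) < ((n:ℝ) / d) ^ d := by
    have h1 : (0:ℝ) < (n:ℝ) := by exact_mod_cast hn
    have h2 : (0:ℝ) < (d:ℝ) := by exact_mod_cast (by omega : 1 ≤ d)
    positivity
  have step_c : ((3 * s).choose (2 * u) : ℝ) / (n.choose d : ℝ)
      ≤ (11 / 10 : ℝ) ^ s / ((n:ℝ) / d) ^ d :=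
    div_le_div₀ (by positivity) hB hndpos hlow
  have step_d : (11 / 10 : ℝ) ^ s / ((n:ℝ) / d) ^ d
      = (11 / 10 : ℝ) ^ s * ((d:ℝ) / n) ^ d := by
    rw [div_eq_mul_inv, ← inv_pow, inv_div]
  have hs3d : s ≤ 3 * d := by omega
  have step_e : (11 / 10 : ℝ) ^ s ≤ (1331 / 1000 : ℝ) ^ d := by
    calc (11 / 10 : ℝ) ^ s ≤ (11 / 10 : ℝ) ^ (3 * d) :=
          pow_le_pow_right₀ (by norm_num) hs3d
      _ = ((11 / 10 : ℝ) ^ (3:ℕ)) ^ d := by rw [← pow_mul]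
      _ = (1331 / 1000 : ℝ) ^ d := by norm_num
  have step_f : ((d:ℝ) / n) ^ d ≤ (((s:ℝ) + 1) / (2 * n)) ^ d := by
    apply pow_le_pow_left₀ (by positivity)
    rw [div_le_div_iff₀ (by exact_mod_cast hn) (by positivity)]
    have : (2:ℝ) * d ≤ (s:ℝ) + 1 := by exact_mod_cast harith.2.2.1
    nlinarith [show (0:ℝ) ≤ (n:ℝ) from by positivity]
  calc ((2 * n).choose s : ℝ) * ((3 * s).choose (2 * u))
        * ((3 * n).choose u) / ((6 * n).choose (2 * u))
      ≤ ((3 * s).choose (2 * u) : ℝ) / (n.choose d : ℝ) := by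
        rw [← step_b]; exact step_a
    _ ≤ (11 / 10 : ℝ) ^ s / ((n:ℝ) / d) ^ d := step_c
    _ = (11 / 10 : ℝ) ^ s * ((d:ℝ) / n) ^ d := step_d
    _ ≤ (1331 / 1000 : ℝ) ^ d * (((s:ℝ) + 1) / (2 * n)) ^ d := by
        apply mul_le_mul step_e step_f (by positivity) (by positivity)
    _ = (1331 * ((s : ℝ) + 1) / (2000 * n)) ^ d := by
        rw [← mul_pow]
        congr 1
        field_simp
        ring

lemma sum_bound (n : ℕ) (hn : 8 ≤ n) :
    ∑ s ∈ Finset.Icc 1 n, (1331 * ((s:ℝ) + 1) / (2000 * n)) ^ (uu s - s)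
      ≤ (Nat.sqrt (Nat.sqrt n) : ℝ)
          * (1331 * ((Nat.sqrt (Nat.sqrt n) : ℝ) + 1) / (2000 * n))
        + (n : ℝ) * (3 / 4 : ℝ) ^ ((Nat.sqrt (Nat.sqrt n) + 1) / 3) := by
  classical
  set L := Nat.sqrt (Nat.sqrt n) with hL
  have hnR : (0:ℝ) < n := by
    have : (0:ℕ) < n := by omega
    exact_mod_cast this
  have hbfacts : ∀ s, 1 ≤ s → s ≤ n →
      (0:ℝ) ≤ 1331 * ((s:ℝ) + 1) / (2000 * n)
        ∧ 1331 * ((s:ℝ) + 1) / (2000 * n) ≤ 3 / 4 := by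
    intro s hs1 hsn
    constructor
    · positivity
    · rw [div_le_iff₀ (by positivity)]
      have hsnR : (s:ℝ) ≤ n := by exact_mod_cast hsn
      have h8 : (8:ℝ) ≤ n := by exact_mod_cast hn
      nlinarith
  rw [← Finset.sum_filter_add_sum_filter_not (Finset.Icc 1 n) (fun s => s ≤ L)]
  have piece1 : ∑ s ∈ (Finset.Icc 1 n).filter (fun s => s ≤ L),
      (1331 * ((s:ℝ) + 1) / (2000 * n)) ^ (uu s - s)
      ≤ (L : ℝ) * (1331 * ((L : ℝ) + 1) / (2000 * n)) := by
    have hcard : ((Finset.Icc 1 n).filter (fun s => s ≤ L)).card ≤ L := by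
      have hsub : (Finset.Icc 1 n).filter (fun s => s ≤ L) ⊆ Finset.Icc 1 L := by
        intro s hs
        simp only [Finset.mem_filter, Finset.mem_Icc] at hs ⊢
        exact ⟨hs.1.1, hs.2⟩
      calc ((Finset.Icc 1 n).filter (fun s => s ≤ L)).card
          ≤ (Finset.Icc 1 L).card := Finset.card_le_card hsub
        _ = L := by rw [Nat.card_Icc]; omega
    have hterm : ∀ s ∈ (Finset.Icc 1 n).filter (fun s => s ≤ L),
        (1331 * ((s:ℝ) + 1) / (2000 * n)) ^ (uu s - s)
          ≤ 1331 * ((L : ℝ) + 1) / (2000 * n) := by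
      intro s hs
      simp only [Finset.mem_filter, Finset.mem_Icc] at hs
      obtain ⟨⟨hs1, hsn⟩, hsL⟩ := hs
      obtain ⟨hb0, hb1⟩ := hbfacts s hs1 hsn
      have harith := uu_arith s hs1
      have hsLR : (s:ℝ) ≤ L := by exact_mod_cast hsL
      calc (1331 * ((s:ℝ) + 1) / (2000 * n)) ^ (uu s - s)
          ≤ (1331 * ((s:ℝ) + 1) / (2000 * n)) ^ 1 :=
            pow_le_pow_of_le_one hb0 (by linarith) harith.2.2.2.1
        _ = 1331 * ((s:ℝ) + 1) / (2000 * n) := pow_one _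
        _ ≤ 1331 * ((L : ℝ) + 1) / (2000 * n) := by gcongr
    calc ∑ s ∈ (Finset.Icc 1 n).filter (fun s => s ≤ L),
          (1331 * ((s:ℝ) + 1) / (2000 * n)) ^ (uu s - s)
        ≤ ((Finset.Icc 1 n).filter (fun s => s ≤ L)).card
            • (1331 * ((L : ℝ) + 1) / (2000 * n)) :=
          Finset.sum_le_card_nsmul _ _ _ hterm
      _ ≤ (L : ℝ) * (1331 * ((L : ℝ) + 1) / (2000 * n)) := by
          rw [nsmul_eq_mul]
          apply mul_le_mul_of_nonneg_right ?_ (by positivity)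
          exact_mod_cast hcard
  have piece2 : ∑ s ∈ (Finset.Icc 1 n).filter (fun s => ¬ s ≤ L),
      (1331 * ((s:ℝ) + 1) / (2000 * n)) ^ (uu s - s)
      ≤ (n : ℝ) * (3 / 4 : ℝ) ^ ((L + 1) / 3) := by
    have hcard : ((Finset.Icc 1 n).filter (fun s => ¬ s ≤ L)).card ≤ n := by
      calc ((Finset.Icc 1 n).filter (fun s => ¬ s ≤ L)).card
          ≤ (Finset.Icc 1 n).card := Finset.card_le_card (Finset.filter_subset _ _)
        _ = n := by rw [Nat.card_Icc]; omega
    have hterm : ∀ s ∈ (Finset.Icc 1 n).filter (fun s => ¬ s ≤ L),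
        (1331 * ((s:ℝ) + 1) / (2000 * n)) ^ (uu s - s)
          ≤ (3 / 4 : ℝ) ^ ((L + 1) / 3) := by
      intro s hs
      simp only [Finset.mem_filter, Finset.mem_Icc] at hs
      obtain ⟨⟨hs1, hsn⟩, hsL⟩ := hs
      obtain ⟨hb0, hb1⟩ := hbfacts s hs1 hsn
      have harith := uu_arith s hs1
      have hde : (L + 1) / 3 ≤ uu s - s := by
        have h3d : s ≤ 3 * (uu s - s) := by omega
        have hLs : L + 1 ≤ s := by omega
        have := Nat.div_mul_le_self (L + 1) 3
        have h2 : 3 * ((L + 1) / 3) ≤ L + 1 := by omega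
        omega
      calc (1331 * ((s:ℝ) + 1) / (2000 * n)) ^ (uu s - s)
          ≤ (3 / 4 : ℝ) ^ (uu s - s) := pow_le_pow_left₀ hb0 hb1 _
        _ ≤ (3 / 4 : ℝ) ^ ((L + 1) / 3) :=
            pow_le_pow_of_le_one (by norm_num) (by norm_num) hde
    calc ∑ s ∈ (Finset.Icc 1 n).filter (fun s => ¬ s ≤ L),
          (1331 * ((s:ℝ) + 1) / (2000 * n)) ^ (uu s - s)
        ≤ ((Finset.Icc 1 n).filter (fun s => ¬ s ≤ L)).card
            • ((3 / 4 : ℝ) ^ ((L + 1) / 3)) :=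
          Finset.sum_le_card_nsmul _ _ _ hterm
      _ ≤ (n : ℝ) * (3 / 4 : ℝ) ^ ((L + 1) / 3) := by
          rw [nsmul_eq_mul]
          apply mul_le_mul_of_nonneg_right ?_ (by positivity)
          exact_mod_cast hcard
  linarith

open Filter Topology in
lemma bound_tendsto_zero :
    Tendsto (fun n : ℕ => (Nat.sqrt (Nat.sqrt n) : ℝ)
          * (1331 * ((Nat.sqrt (Nat.sqrt n) : ℝ) + 1) / (2000 * n))
        + (n : ℝ) * (3 / 4 : ℝ) ^ ((Nat.sqrt (Nat.sqrt n) + 1) / 3)) atTop (𝓝 0) := by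
  have hsq : Tendsto Nat.sqrt atTop atTop := by
    apply tendsto_atTop_atTop.mpr
    intro b
    exact ⟨b * b, fun n hn => Nat.le_sqrt.mpr hn⟩
  have hsq4 : Tendsto (fun n => Nat.sqrt (Nat.sqrt n)) atTop atTop := hsq.comp hsq
  have part1 : Tendsto (fun n : ℕ => (Nat.sqrt (Nat.sqrt n) : ℝ)
      * (1331 * ((Nat.sqrt (Nat.sqrt n) : ℝ) + 1) / (2000 * n))) atTop (𝓝 0) := by
    have hupper : Tendsto (fun n : ℕ =>
        (1331 / 2000 : ℝ) * (2 / (Nat.sqrt n : ℝ) + 1 / (n:ℝ))) atTop (𝓝 0) := by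
      have t1 : Tendsto (fun n : ℕ => 2 / (Nat.sqrt n : ℝ)) atTop (𝓝 0) := by
        have hc : Tendsto (fun n : ℕ => ((Nat.sqrt n : ℕ) : ℝ)) atTop atTop :=
          tendsto_natCast_atTop_atTop.comp hsq
        have h := hc.inv_tendsto_atTop
        have h2 := h.const_mul (2:ℝ)
        simpa [div_eq_mul_inv, mul_zero] using h2
      have t2 : Tendsto (fun n : ℕ => 1 / (n:ℝ)) atTop (𝓝 0) :=
        tendsto_one_div_atTop_nhds_zero_nat
      have h3 := (t1.add t2).const_mul (1331 / 2000 : ℝ)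
      simpa using h3
    apply squeeze_zero_norm' ?_ hupper
    filter_upwards [Filter.eventually_ge_atTop 1] with n hn
    have hn0 : (0:ℝ) < n := by exact_mod_cast hn
    have hsqpos : 1 ≤ Nat.sqrt n := by
      rw [Nat.le_sqrt]
      omega
    have hsqR : (1:ℝ) ≤ (Nat.sqrt n : ℝ) := by exact_mod_cast hsqpos
    set L := Nat.sqrt (Nat.sqrt n) with hL
    have hLL : L * L ≤ Nat.sqrt n := by
      have := Nat.sqrt_le' (Nat.sqrt n)
      nlinarith [this]
    have hLsum : (L * (L + 1) : ℕ) ≤ 2 * Nat.sqrt n + 1 := by nlinarith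
    have hLsumR : ((L:ℝ) * ((L:ℝ) + 1)) ≤ 2 * (Nat.sqrt n : ℝ) + 1 := by
      exact_mod_cast hLsum
    have hnonneg : (0:ℝ) ≤ (L : ℝ) * (1331 * ((L : ℝ) + 1) / (2000 * n)) := by
      positivity
    rw [Real.norm_eq_abs, abs_of_nonneg hnonneg]
    have key : (L : ℝ) * (1331 * ((L : ℝ) + 1) / (2000 * (n:ℝ)))
        = (1331 / 2000) * ((L:ℝ) * ((L:ℝ) + 1) / n) := by
      field_simp
    rw [key]
    have hsqn : (Nat.sqrt n : ℝ) * (Nat.sqrt n : ℝ) ≤ n := by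
      have := Nat.sqrt_le' n
      have h2 : Nat.sqrt n * Nat.sqrt n ≤ n := by nlinarith [this]
      exact_mod_cast h2
    have e1 : (L:ℝ) * ((L:ℝ) + 1) / n ≤ (2 * (Nat.sqrt n:ℝ) + 1) / n := by gcongr
    have e2 : (2 * (Nat.sqrt n:ℝ)) / n ≤ 2 / (Nat.sqrt n:ℝ) := by
      rw [div_le_div_iff₀ hn0 (by linarith)]
      nlinarith
    have e3 : (2 * (Nat.sqrt n:ℝ) + 1) / n = (2 * (Nat.sqrt n:ℝ)) / n + 1 / n :=
      add_div _ _ _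
    have step : (L:ℝ) * ((L:ℝ) + 1) / n ≤ 2 / (Nat.sqrt n : ℝ) + 1 / n := by
      rw [e3] at e1
      linarith
    exact mul_le_mul_of_nonneg_left step (by norm_num)
  have part2 : Tendsto (fun n : ℕ =>
      (n : ℝ) * (3 / 4 : ℝ) ^ ((Nat.sqrt (Nat.sqrt n) + 1) / 3)) atTop (𝓝 0) := by
    have hphi : Tendsto (fun k : ℕ => ((k:ℝ)) ^ (4:ℕ) * (3/4 : ℝ) ^ k) atTop (𝓝 0) :=
      tendsto_pow_const_mul_const_pow_of_abs_lt_one 4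
        (by rw [abs_of_pos (by norm_num : (0:ℝ) < 3/4)]; norm_num)
    have hshift : Tendsto (fun m : ℕ => (((m+1:ℕ)):ℝ) ^ (4:ℕ) * (3/4 : ℝ) ^ (m+1))
        atTop (𝓝 0) := hphi.comp (tendsto_add_atTop_nat 1)
    have hpsi : Tendsto (fun m : ℕ =>
        (108 : ℝ) * ((((m+1:ℕ)):ℝ) ^ (4:ℕ) * (3/4 : ℝ) ^ (m+1))) atTop (𝓝 0) := by
      have h2 := hshift.const_mul (108:ℝ)
      simpa using h2
    have hq : Tendsto (fun n : ℕ => (Nat.sqrt (Nat.sqrt n) + 1) / 3) atTop atTop := by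
      have h7 : Tendsto (fun m : ℕ => (m + 1) / 3) atTop atTop :=
        tendsto_atTop_atTop.mpr (fun b => ⟨3 * b, fun m hm => by omega⟩)
      exact h7.comp hsq4
    have hcomp := hpsi.comp hq
    apply squeeze_zero_norm' ?_ hcomp
    filter_upwards [Filter.eventually_ge_atTop 1] with n hn
    simp only [Function.comp]
    set L := Nat.sqrt (Nat.sqrt n) with hL
    set q := (L + 1) / 3 with hq3
    have hnonneg : (0:ℝ) ≤ (n : ℝ) * (3 / 4 : ℝ) ^ q := by positivity
    rw [Real.norm_eq_abs, abs_of_nonneg hnonneg]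
    have hb1 : n < (Nat.sqrt n + 1) * (Nat.sqrt n + 1) := Nat.lt_succ_sqrt n
    have hb2 : Nat.sqrt n < (L + 1) * (L + 1) := Nat.lt_succ_sqrt (Nat.sqrt n)
    have hb3 : L + 1 ≤ 3 * q + 3 := by omega
    have hnle : n ≤ (3 * (q + 1)) * (3 * (q + 1)) * ((3 * (q + 1)) * (3 * (q + 1))) := by
      have h4 : n ≤ ((L+1) * (L+1)) * ((L+1) * (L+1)) := by nlinarith
      have h5 : (L+1) * (L+1) ≤ (3*(q+1)) * (3*(q+1)) := by nlinarith
      nlinarith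
    have hnleR : (n:ℝ) ≤ 81 * ((q:ℝ) + 1) ^ (4:ℕ) := by
      have hcast : (n:ℝ) ≤ ((3 * ((q:ℝ) + 1)) * (3 * ((q:ℝ) + 1)))
          * ((3 * ((q:ℝ) + 1)) * (3 * ((q:ℝ) + 1))) := by
        exact_mod_cast hnle
      calc (n:ℝ) ≤ ((3 * ((q:ℝ) + 1)) * (3 * ((q:ℝ) + 1)))
          * ((3 * ((q:ℝ) + 1)) * (3 * ((q:ℝ) + 1))) := hcast
        _ = 81 * ((q:ℝ) + 1) ^ (4:ℕ) := by ring
    calc (n : ℝ) * (3 / 4 : ℝ) ^ q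
        ≤ (81 * ((q:ℝ) + 1) ^ (4:ℕ)) * (3 / 4 : ℝ) ^ q := by
          apply mul_le_mul_of_nonneg_right hnleR (by positivity)
      _ = 108 * ((((q + 1:ℕ)):ℝ) ^ (4:ℕ) * (3/4 : ℝ) ^ (q + 1)) := by
          push_cast
          rw [pow_succ]
          ring
  have hsum := part1.add part2
  simpa using hsum

end CheegerAux

open CheegerAux

/-- There is a constant C > 0 such that, with probability tending
to 1 as n → ∞, a uniformly random fixed-point-free involution f of the 6n
half-edges has the property that every nonempty vertex set S with |S| ≤ n has at
least C·|S| half-edges at vertices of S matched by f to half-edges at vertices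
outside S (i.e., the random 3-regular graph has Cheeger constant > C). -/
theorem prob_cheeger_constant_bounded_below :
    ∃ C > (0 : ℝ),
      Tendsto
        (fun n => probFPF n (fun f =>
          ∀ S : Finset (Fin (2 * n)), S.Nonempty → S.card ≤ n →
            C * S.card ≤
              ((Finset.univ.filter
                  (fun x : HalfEdges n => x.1 ∈ S ∧ (f x).1 ∉ S)).card : ℝ)))
        atTop (𝓝 1) := by
  classical
  refine ⟨1/100, by norm_num, ?_⟩
  set B : ℕ → ℝ := fun n => (Nat.sqrt (Nat.sqrt n) : ℝ)
          * (1331 * ((Nat.sqrt (Nat.sqrt n) : ℝ) + 1) / (2000 * n))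
        + (n : ℝ) * (3 / 4 : ℝ) ^ ((Nat.sqrt (Nat.sqrt n) + 1) / 3) with hB
  have hkey : ∀ n : ℕ, 8 ≤ n →
      1 - B n ≤ probFPF n (fun f =>
          ∀ S : Finset (Fin (2 * n)), S.Nonempty → S.card ≤ n →
            (1/100 : ℝ) * S.card ≤
              ((Finset.univ.filter
                  (fun x : HalfEdges n => x.1 ∈ S ∧ (f x).1 ∉ S)).card : ℝ))
        ∧ probFPF n (fun f =>
          ∀ S : Finset (Fin (2 * n)), S.Nonempty → S.card ≤ n →
            (1/100 : ℝ) * S.card ≤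
              ((Finset.univ.filter
                  (fun x : HalfEdges n => x.1 ∈ S ∧ (f x).1 ∉ S)).card : ℝ)) ≤ 1 := by
    intro n hn
    have hn1 : 1 ≤ n := by omega
    set Ω : Finset (Equiv.Perm (HalfEdges n)) :=
      Finset.univ.filter (fun f => IsFPFInvolution f) with hΩ
    set Bad : Finset (Equiv.Perm (HalfEdges n)) :=
      Finset.univ.filter (fun f => IsFPFInvolution f ∧
        ∃ S : Finset (Fin (2 * n)), S.Nonempty ∧ S.card ≤ n ∧
          100 * (Finset.univ.filter
            (fun x : HalfEdges n => x.1 ∈ S ∧ (f x).1 ∉ S)).card < S.card) with hBad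
    have hΩpos : 0 < Ω.card := omega_card_pos n
    have hΩposR : (0:ℝ) < (Ω.card : ℝ) := by exact_mod_cast hΩpos
    -- pointwise iff between the good event and the complement of the bad event
    have hpoint : ∀ f : Equiv.Perm (HalfEdges n),
        (∀ S : Finset (Fin (2 * n)), S.Nonempty → S.card ≤ n →
            (1/100 : ℝ) * S.card ≤
              ((Finset.univ.filter
                  (fun x : HalfEdges n => x.1 ∈ S ∧ (f x).1 ∉ S)).card : ℝ))
        ↔ ¬ (∃ S : Finset (Fin (2 * n)), S.Nonempty ∧ S.card ≤ n ∧
            100 * (Finset.univ.filter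
              (fun x : HalfEdges n => x.1 ∈ S ∧ (f x).1 ∉ S)).card < S.card) := by
      intro f
      constructor
      · rintro hgood ⟨S, hS1, hS2, hS3⟩
        have h := hgood S hS1 hS2
        have hc : ((100 * (Finset.univ.filter
            (fun x : HalfEdges n => x.1 ∈ S ∧ (f x).1 ∉ S)).card : ℕ) : ℝ)
            < (S.card : ℝ) := by exact_mod_cast hS3
        push_cast at hc
        linarith
      · intro hnotbad S hS1 hS2
        by_contra hlt
        push_neg at hlt
        apply hnotbad
        refine ⟨S, hS1, hS2, ?_⟩
        have : ((100 * (Finset.univ.filter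
            (fun x : HalfEdges n => x.1 ∈ S ∧ (f x).1 ∉ S)).card : ℕ) : ℝ)
            < (S.card : ℝ) := by push_cast; linarith
        exact_mod_cast this
    have hBadsub : Bad ⊆ Ω := by
      intro f hf
      simp only [hBad, hΩ, Finset.mem_filter] at hf ⊢
      exact ⟨hf.1, hf.2.1⟩
    -- identity for the probability
    have hnum : Nat.card {f : Equiv.Perm (HalfEdges n) // IsFPFInvolution f ∧
        ∀ S : Finset (Fin (2 * n)), S.Nonempty → S.card ≤ n →
          (1/100 : ℝ) * S.card ≤
            ((Finset.univ.filter
                (fun x : HalfEdges n => x.1 ∈ S ∧ (f x).1 ∉ S)).card : ℝ)}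
        = Ω.card - Bad.card := by
      rw [← filter_card_eq_nat_card]
      have heq : Finset.univ.filter (fun f : Equiv.Perm (HalfEdges n) =>
          IsFPFInvolution f ∧
          ∀ S : Finset (Fin (2 * n)), S.Nonempty → S.card ≤ n →
            (1/100 : ℝ) * S.card ≤
              ((Finset.univ.filter
                  (fun x : HalfEdges n => x.1 ∈ S ∧ (f x).1 ∉ S)).card : ℝ))
          = Ω \ Bad := by
        ext f
        simp only [hΩ, hBad, Finset.mem_sdiff, Finset.mem_filter, Finset.mem_univ,
          true_and]
        constructor
        · rintro ⟨hf, hgood⟩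
          exact ⟨hf, fun hc => ((hpoint f).mp hgood) hc.2⟩
        · rintro ⟨hf, hnb⟩
          refine ⟨hf, (hpoint f).mpr ?_⟩
          intro hc
          exact hnb ⟨hf, hc⟩
      rw [heq, Finset.card_sdiff_of_subset hBadsub]
    have hden : Nat.card {f : Equiv.Perm (HalfEdges n) // IsFPFInvolution f}
        = Ω.card := by rw [← filter_card_eq_nat_card]
    have hprob : probFPF n (fun f =>
        ∀ S : Finset (Fin (2 * n)), S.Nonempty → S.card ≤ n →
          (1/100 : ℝ) * S.card ≤
            ((Finset.univ.filter
                (fun x : HalfEdges n => x.1 ∈ S ∧ (f x).1 ∉ S)).card : ℝ))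
        = 1 - (Bad.card : ℝ) / (Ω.card : ℝ) := by
      rw [probFPF, hnum, hden]
      rw [Nat.cast_sub (Finset.card_le_card hBadsub)]
      field_simp
    rw [hprob]
    constructor
    · -- lower bound via the union bound
      have htot := total_bound n hn1
      have hterm : ∑ s ∈ Finset.Icc 1 n,
          ((2 * n).choose s : ℝ) * ((3 * s).choose (2 * uu s))
            * ((3 * n).choose (uu s)) / ((6 * n).choose (2 * uu s))
          ≤ ∑ s ∈ Finset.Icc 1 n,
            (1331 * ((s:ℝ) + 1) / (2000 * n)) ^ (uu s - s) := by
        apply Finset.sum_le_sum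
        intro s hs
        rw [Finset.mem_Icc] at hs
        exact term_bound n s hn1 hs.1 hs.2
      have hsum := sum_bound n hn
      have hratio : (Bad.card : ℝ) / (Ω.card : ℝ) ≤ B n := by
        rw [div_le_iff₀ hΩposR]
        calc (Bad.card : ℝ)
            ≤ (Ω.card : ℝ) * ∑ s ∈ Finset.Icc 1 n,
              ((2 * n).choose s : ℝ) * ((3 * s).choose (2 * uu s))
                * ((3 * n).choose (uu s)) / ((6 * n).choose (2 * uu s)) := htot
          _ ≤ (Ω.card : ℝ) * (B n) := by
              apply mul_le_mul_of_nonneg_left _ (le_of_lt hΩposR)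
              exact le_trans hterm hsum
          _ = B n * (Ω.card : ℝ) := by ring
      linarith
    · -- upper bound: probability at most 1
      have : (0:ℝ) ≤ (Bad.card : ℝ) / (Ω.card : ℝ) := by positivity
      linarith
  -- final squeeze
  have hg : Tendsto (fun n : ℕ => 1 - B n) atTop (𝓝 1) := by
    have := bound_tendsto_zero
    have h2 := (tendsto_const_nhds (x := (1:ℝ)) (f := atTop)).sub this
    simpa using h2
  have hh : Tendsto (fun _ : ℕ => (1:ℝ)) atTop (𝓝 1) := tendsto_const_nhds
  apply tendsto_of_tendsto_of_tendsto_of_le_of_le' hg hh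
  · filter_upwards [Filter.eventually_ge_atTop 8] with n hn
    exact (hkey n hn).1
  · filter_upwards [Filter.eventually_ge_atTop 8] with n hn
    exact (hkey n hn).2
end
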